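/- arXiv:2208.03246 — 5 statements merged into one kernel-verified Lean document; each statement's English description precedes it below -/
import Mathlib

section
/- Let P, Q be d×d symmetric positive-semidefinite matrices, Γ a k×k symmetric positive-definite matrix, and A a k×d matrix. With K(Q) = Q Aᵀ (A Q Aᵀ + Γ)⁻¹, one has ‖K(Q) − K(P)‖ ≤ ‖Q − P‖ ‖A‖ ‖Γ⁻¹‖ (1 + min(‖P‖, ‖Q‖) ‖A‖² ‖Γ⁻¹‖). -/
open Matrix

/-- Operator (spectral) norm of a real matrix, via its action on Euclidean space. -/
noncomputable def opNorm {m n : Type*} [Fintype m] [Fintype n] [DecidableEq n]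
    (A : Matrix m n ℝ) : ℝ :=
  ‖LinearMap.toContinuousLinearMap (Matrix.toEuclideanLin A)‖

/-- Maximum absolute entry of a matrix. -/
noncomputable def maxNorm {m n : Type*} [Fintype m] [Fintype n] (A : Matrix m n ℝ) : ℝ :=
  ⨆ ij : m × n, |A ij.1 ij.2|

section Aux
open scoped Matrix.Norms.L2Operator RealInnerProductSpace

private lemma norm_inv_le_norm_inv {k : ℕ} {S Γ : Matrix (Fin k) (Fin k) ℝ}
    (hΓ : Γ.PosDef) (hS : S.PosDef) (hle : (S - Γ).PosSemidef) :
    ‖S⁻¹‖ ≤ ‖Γ⁻¹‖ := by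
  have dotinner : ∀ u v : Fin k → ℝ,
      u ⬝ᵥ v = ⟪(WithLp.equiv 2 _).symm u, (WithLp.equiv 2 _).symm v⟫ := by
    intro u v
    simp [PiLp.inner_apply, dotProduct, RCLike.inner_apply, mul_comm]
  have normsq : ∀ v : Fin k → ℝ, ‖(WithLp.equiv 2 ((Fin k) → ℝ)).symm v‖ ^ 2 = v ⬝ᵥ v := by
    intro v
    rw [dotinner, ← real_inner_self_eq_norm_sq]
  have hmv : ∀ (M : Matrix (Fin k) (Fin k) ℝ) (a b : Fin k → ℝ),
      (M *ᵥ a) ⬝ᵥ b = a ⬝ᵥ (Mᵀ *ᵥ b) := by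
    intro M a b
    rw [dotProduct_comm, dotProduct_mulVec, ← mulVec_transpose, dotProduct_comm]
  open scoped MatrixOrder in
  set R := CFC.sqrt Γ with hRdef
  open scoped MatrixOrder in
  have hRR : R * R = Γ := CFC.sqrt_mul_sqrt_self Γ hΓ.posSemidef.nonneg
  have hRsymm : Rᵀ = R := by
    open scoped MatrixOrder in
    have := (CFC.sqrt_nonneg Γ).posSemidef.isHermitian
    rwa [IsHermitian, conjTranspose_eq_transpose_of_trivial] at this
  have hRunit : IsUnit R.det := by
    have h2 : R.det * R.det = Γ.det := by rw [← det_mul, hRR]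
    have := hΓ.det_pos
    refine isUnit_iff_ne_zero.2 fun h => ?_
    rw [h, mul_zero] at h2; rw [← h2] at this; exact lt_irrefl _ this
  have hRinv : R * R⁻¹ = 1 := mul_nonsing_inv R hRunit
  have hΓinv : Γ⁻¹ = R⁻¹ * R⁻¹ := by rw [← hRR, Matrix.mul_inv_rev]
  have e1 : ∀ v : Fin k → ℝ, (R *ᵥ v) ⬝ᵥ (R⁻¹ *ᵥ v) = v ⬝ᵥ v := by
    intro v
    rw [hmv, hRsymm, mulVec_mulVec, hRinv, one_mulVec]
  have e2 : ∀ v : Fin k → ℝ, (R *ᵥ v) ⬝ᵥ (R *ᵥ v) = v ⬝ᵥ (Γ *ᵥ v) := by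
    intro v
    rw [hmv, hRsymm, mulVec_mulVec, hRR]
  have e3 : ∀ v : Fin k → ℝ, (R⁻¹ *ᵥ v) ⬝ᵥ (R⁻¹ *ᵥ v) = v ⬝ᵥ (Γ⁻¹ *ᵥ v) := by
    intro v
    rw [hmv, transpose_nonsing_inv, hRsymm, mulVec_mulVec, ← hΓinv]
  have e4 : ∀ v : Fin k → ℝ, v ⬝ᵥ (Γ⁻¹ *ᵥ v) ≤ ‖Γ⁻¹‖ * (v ⬝ᵥ v) := by
    intro v
    have h1 : ‖(WithLp.equiv 2 ((Fin k) → ℝ)).symm (Γ⁻¹ *ᵥ v)‖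
        ≤ ‖Γ⁻¹‖ * ‖(WithLp.equiv 2 ((Fin k) → ℝ)).symm v‖ :=
      Γ⁻¹.l2_opNorm_mulVec ((WithLp.equiv 2 ((Fin k) → ℝ)).symm v)
    calc v ⬝ᵥ (Γ⁻¹ *ᵥ v)
        = ⟪(WithLp.equiv 2 ((Fin k) → ℝ)).symm v,
            (WithLp.equiv 2 ((Fin k) → ℝ)).symm (Γ⁻¹ *ᵥ v)⟫ := dotinner _ _
      _ ≤ ‖(WithLp.equiv 2 ((Fin k) → ℝ)).symm v‖ *
            ‖(WithLp.equiv 2 ((Fin k) → ℝ)).symm (Γ⁻¹ *ᵥ v)‖ := real_inner_le_norm _ _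
      _ ≤ ‖(WithLp.equiv 2 ((Fin k) → ℝ)).symm v‖ *
            (‖Γ⁻¹‖ * ‖(WithLp.equiv 2 ((Fin k) → ℝ)).symm v‖) := by
          gcongr
      _ = ‖Γ⁻¹‖ * (v ⬝ᵥ v) := by rw [← normsq]; ring
  -- Step A
  have stepA : ∀ v : Fin k → ℝ, v ⬝ᵥ v ≤ ‖Γ⁻¹‖ * (v ⬝ᵥ (Γ *ᵥ v)) := by
    intro v
    set a := ‖(WithLp.equiv 2 ((Fin k) → ℝ)).symm (R *ᵥ v)‖ with ha
    set b := ‖(WithLp.equiv 2 ((Fin k) → ℝ)).symm (R⁻¹ *ᵥ v)‖ with hb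
    set t := ‖(WithLp.equiv 2 ((Fin k) → ℝ)).symm v‖ with ht
    have h1 : t ^ 2 ≤ a * b := by
      rw [normsq, ← e1 v, dotinner]
      exact real_inner_le_norm _ _
    have h2 : a ^ 2 = v ⬝ᵥ (Γ *ᵥ v) := by rw [normsq, e2]
    have h3 : b ^ 2 ≤ ‖Γ⁻¹‖ * t ^ 2 := by rw [normsq, e3, normsq]; exact e4 v
    have hc : (0:ℝ) ≤ ‖Γ⁻¹‖ := norm_nonneg _
    rw [← normsq, ← h2]
    have hab : 0 ≤ a * b := mul_nonneg (norm_nonneg _) (norm_nonneg _)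
    rcases eq_or_lt_of_le (norm_nonneg ((WithLp.equiv 2 ((Fin k) → ℝ)).symm v)) with h0 | h0
    · have ht0 : t = 0 := h0.symm
      rw [← ht, ht0]
      norm_num
      positivity
    · rw [← ht] at h0
      have h4 : t^2 * t^2 ≤ (a*b)*(a*b) := mul_le_mul h1 h1 (sq_nonneg t) hab
      have h5 : a^2*(b^2) ≤ a^2*(‖Γ⁻¹‖*t^2) := mul_le_mul_of_nonneg_left h3 (sq_nonneg a)
      nlinarith [mul_pos h0 h0]
  -- Step B
  have hSdet : IsUnit S.det := isUnit_iff_ne_zero.2 (ne_of_gt hS.det_pos)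
  have hSS : S * S⁻¹ = 1 := mul_nonsing_inv _ hSdet
  rw [Matrix.l2_opNorm_def]
  refine ContinuousLinearMap.opNorm_le_bound _ (norm_nonneg _) fun y => ?_
  set y' : Fin k → ℝ := WithLp.equiv 2 ((Fin k) → ℝ) y with hy'
  set v : Fin k → ℝ := S⁻¹ *ᵥ y' with hv
  have happ : ((Matrix.toEuclideanLin (𝕜 := ℝ) (m := Fin k) (n := Fin k)).trans
      LinearMap.toContinuousLinearMap) S⁻¹ y = (WithLp.equiv 2 ((Fin k) → ℝ)).symm v := rfl
  rw [happ]
  have hSv : S *ᵥ v = y' := by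
    rw [hv, mulVec_mulVec, hSS, one_mulVec]
  have hΓS : v ⬝ᵥ (Γ *ᵥ v) ≤ v ⬝ᵥ (S *ᵥ v) := by
    have := hle.dotProduct_mulVec_nonneg v
    rw [star_trivial, sub_mulVec, dotProduct_sub] at this
    linarith
  have hvy : v ⬝ᵥ (S *ᵥ v) ≤ ‖(WithLp.equiv 2 ((Fin k) → ℝ)).symm v‖ * ‖y‖ := by
    rw [hSv, dotinner]
    have : (WithLp.equiv 2 ((Fin k) → ℝ)).symm y' = y := by simp [hy']
    rw [this]
    exact real_inner_le_norm _ _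
  have key : ‖(WithLp.equiv 2 ((Fin k) → ℝ)).symm v‖ ^ 2
      ≤ ‖Γ⁻¹‖ * (‖(WithLp.equiv 2 ((Fin k) → ℝ)).symm v‖ * ‖y‖) := by
    rw [normsq]
    calc v ⬝ᵥ v ≤ ‖Γ⁻¹‖ * (v ⬝ᵥ (Γ *ᵥ v)) := stepA v
      _ ≤ ‖Γ⁻¹‖ * (v ⬝ᵥ (S *ᵥ v)) := by
          exact mul_le_mul_of_nonneg_left hΓS (norm_nonneg _)
      _ ≤ ‖Γ⁻¹‖ * (‖(WithLp.equiv 2 ((Fin k) → ℝ)).symm v‖ * ‖y‖) := by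
          exact mul_le_mul_of_nonneg_left hvy (norm_nonneg _)
  rcases eq_or_lt_of_le (norm_nonneg ((WithLp.equiv 2 ((Fin k) → ℝ)).symm v)) with h0 | h0
  · rw [← h0]
    positivity
  · nlinarith [key, h0]


private lemma kalman_aux {d k : ℕ}
    (P Q : Matrix (Fin d) (Fin d) ℝ)
    (Γ : Matrix (Fin k) (Fin k) ℝ) (A : Matrix (Fin k) (Fin d) ℝ)
    (hP : P.PosSemidef) (hQ : Q.PosSemidef) (hΓ : Γ.PosDef) :
    ‖Q * Aᵀ * (A * Q * Aᵀ + Γ)⁻¹ - P * Aᵀ * (A * P * Aᵀ + Γ)⁻¹‖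
      ≤ ‖Q - P‖ * ‖A‖ * ‖Γ⁻¹‖ * (1 + ‖P‖ * ‖A‖ ^ 2 * ‖Γ⁻¹‖) := by
  have hAT : ‖Aᵀ‖ = ‖A‖ := by
    rw [← conjTranspose_eq_transpose_of_trivial]
    exact A.l2_opNorm_conjTranspose
  have hAQ : (A * Q * Aᵀ).PosSemidef := by
    have := hQ.mul_mul_conjTranspose_same A
    rwa [conjTranspose_eq_transpose_of_trivial] at this
  have hAP : (A * P * Aᵀ).PosSemidef := by
    have := hP.mul_mul_conjTranspose_same A
    rwa [conjTranspose_eq_transpose_of_trivial] at this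
  set SQ := A * Q * Aᵀ + Γ with hSQdef
  set SP := A * P * Aᵀ + Γ with hSPdef
  have hSQ : SQ.PosDef := Matrix.PosDef.posSemidef_add hAQ hΓ
  have hSP : SP.PosDef := Matrix.PosDef.posSemidef_add hAP hΓ
  have hSQΓ : (SQ - Γ).PosSemidef := by
    have : SQ - Γ = A * Q * Aᵀ := by rw [hSQdef, add_sub_cancel_right]
    rwa [this]
  have hSPΓ : (SP - Γ).PosSemidef := by
    have : SP - Γ = A * P * Aᵀ := by rw [hSPdef, add_sub_cancel_right]
    rwa [this]
  have h1 : ‖SQ⁻¹‖ ≤ ‖Γ⁻¹‖ := norm_inv_le_norm_inv hΓ hSQ hSQΓ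
  have h2 : ‖SP⁻¹‖ ≤ ‖Γ⁻¹‖ := norm_inv_le_norm_inv hΓ hSP hSPΓ
  have hSQi : SQ * SQ⁻¹ = 1 := mul_nonsing_inv _ (isUnit_iff_ne_zero.2 (ne_of_gt hSQ.det_pos))
  have hSPi : SP⁻¹ * SP = 1 := nonsing_inv_mul _ (isUnit_iff_ne_zero.2 (ne_of_gt hSP.det_pos))
  have hdiff : A * (Q - P) * Aᵀ = SQ - SP := by
    rw [hSQdef, hSPdef, Matrix.mul_sub, Matrix.sub_mul]; abel
  have key : Q * Aᵀ * SQ⁻¹ - P * Aᵀ * SP⁻¹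
      = (Q - P) * Aᵀ * SQ⁻¹ - P * Aᵀ * (SP⁻¹ * (A * (Q - P) * Aᵀ) * SQ⁻¹) := by
    have e : SP⁻¹ * (SQ - SP) * SQ⁻¹ = SP⁻¹ - SQ⁻¹ := by
      rw [Matrix.mul_sub, Matrix.sub_mul, Matrix.mul_assoc SP⁻¹ SQ SQ⁻¹, hSQi,
        Matrix.mul_one, hSPi, Matrix.one_mul]
    rw [hdiff, e, Matrix.mul_sub, Matrix.sub_mul, Matrix.sub_mul]
    abel
  rw [key]
  have t1 : ‖(Q - P) * Aᵀ * SQ⁻¹‖ ≤ ‖Q - P‖ * ‖A‖ * ‖Γ⁻¹‖ :=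
    calc ‖(Q - P) * Aᵀ * SQ⁻¹‖ ≤ ‖(Q - P) * Aᵀ‖ * ‖SQ⁻¹‖ := Matrix.l2_opNorm_mul _ _
      _ ≤ (‖Q - P‖ * ‖Aᵀ‖) * ‖SQ⁻¹‖ := by
          have := Matrix.l2_opNorm_mul (Q - P) Aᵀ
          exact mul_le_mul_of_nonneg_right this (norm_nonneg _)
      _ ≤ (‖Q - P‖ * ‖Aᵀ‖) * ‖Γ⁻¹‖ := by
          exact mul_le_mul_of_nonneg_left h1 (by positivity)
      _ = ‖Q - P‖ * ‖A‖ * ‖Γ⁻¹‖ := by rw [hAT]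
  have t2 : ‖P * Aᵀ * (SP⁻¹ * (A * (Q - P) * Aᵀ) * SQ⁻¹)‖
      ≤ ‖P‖ * ‖A‖ * (‖Γ⁻¹‖ * (‖A‖ * ‖Q - P‖ * ‖A‖) * ‖Γ⁻¹‖) := by
    have m0 : ‖A * (Q - P) * Aᵀ‖ ≤ ‖A‖ * ‖Q - P‖ * ‖A‖ :=
      calc ‖A * (Q - P) * Aᵀ‖ ≤ ‖A * (Q - P)‖ * ‖Aᵀ‖ := Matrix.l2_opNorm_mul _ _
        _ ≤ (‖A‖ * ‖Q - P‖) * ‖Aᵀ‖ :=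
            mul_le_mul_of_nonneg_right (Matrix.l2_opNorm_mul _ _) (norm_nonneg _)
        _ = ‖A‖ * ‖Q - P‖ * ‖A‖ := by rw [hAT]
    have m1 : ‖SP⁻¹ * (A * (Q - P) * Aᵀ) * SQ⁻¹‖
        ≤ ‖Γ⁻¹‖ * (‖A‖ * ‖Q - P‖ * ‖A‖) * ‖Γ⁻¹‖ :=
      calc ‖SP⁻¹ * (A * (Q - P) * Aᵀ) * SQ⁻¹‖
          ≤ ‖SP⁻¹ * (A * (Q - P) * Aᵀ)‖ * ‖SQ⁻¹‖ := Matrix.l2_opNorm_mul _ _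
        _ ≤ (‖SP⁻¹‖ * ‖A * (Q - P) * Aᵀ‖) * ‖SQ⁻¹‖ :=
            mul_le_mul_of_nonneg_right (Matrix.l2_opNorm_mul _ _) (norm_nonneg _)
        _ ≤ (‖Γ⁻¹‖ * (‖A‖ * ‖Q - P‖ * ‖A‖)) * ‖Γ⁻¹‖ := by
            apply mul_le_mul _ h1 (norm_nonneg _) (by positivity)
            exact mul_le_mul h2 m0 (norm_nonneg _) (norm_nonneg _)
        _ = ‖Γ⁻¹‖ * (‖A‖ * ‖Q - P‖ * ‖A‖) * ‖Γ⁻¹‖ := rfl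
    calc ‖P * Aᵀ * (SP⁻¹ * (A * (Q - P) * Aᵀ) * SQ⁻¹)‖
        ≤ ‖P * Aᵀ‖ * ‖SP⁻¹ * (A * (Q - P) * Aᵀ) * SQ⁻¹‖ := Matrix.l2_opNorm_mul _ _
      _ ≤ (‖P‖ * ‖Aᵀ‖) * (‖Γ⁻¹‖ * (‖A‖ * ‖Q - P‖ * ‖A‖) * ‖Γ⁻¹‖) := by
          apply mul_le_mul (Matrix.l2_opNorm_mul _ _) m1 (norm_nonneg _) (by positivity)
      _ = ‖P‖ * ‖A‖ * (‖Γ⁻¹‖ * (‖A‖ * ‖Q - P‖ * ‖A‖) * ‖Γ⁻¹‖) := by rw [hAT]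
  calc ‖(Q - P) * Aᵀ * SQ⁻¹ - P * Aᵀ * (SP⁻¹ * (A * (Q - P) * Aᵀ) * SQ⁻¹)‖
      ≤ ‖(Q - P) * Aᵀ * SQ⁻¹‖ + ‖P * Aᵀ * (SP⁻¹ * (A * (Q - P) * Aᵀ) * SQ⁻¹)‖ :=
        norm_sub_le _ _
    _ ≤ ‖Q - P‖ * ‖A‖ * ‖Γ⁻¹‖ + ‖P‖ * ‖A‖ * (‖Γ⁻¹‖ * (‖A‖ * ‖Q - P‖ * ‖A‖) * ‖Γ⁻¹‖) :=
        add_le_add t1 t2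
    _ = ‖Q - P‖ * ‖A‖ * ‖Γ⁻¹‖ * (1 + ‖P‖ * ‖A‖ ^ 2 * ‖Γ⁻¹‖) := by ring

end Aux

/-- Continuity of the Kalman gain operator. -/
theorem kalman_gain_continuity {d k : ℕ}
    (P Q : Matrix (Fin d) (Fin d) ℝ)
    (Γ : Matrix (Fin k) (Fin k) ℝ) (A : Matrix (Fin k) (Fin d) ℝ)
    (hP : P.PosSemidef) (hQ : Q.PosSemidef) (hΓ : Γ.PosDef) :
    opNorm (Q * Aᵀ * (A * Q * Aᵀ + Γ)⁻¹ - P * Aᵀ * (A * P * Aᵀ + Γ)⁻¹)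
      ≤ opNorm (Q - P) * opNorm A * opNorm Γ⁻¹ *
        (1 + min (opNorm P) (opNorm Q) * opNorm A ^ 2 * opNorm Γ⁻¹) := by
  open scoped Matrix.Norms.L2Operator in
  show ‖Q * Aᵀ * (A * Q * Aᵀ + Γ)⁻¹ - P * Aᵀ * (A * P * Aᵀ + Γ)⁻¹‖
      ≤ ‖Q - P‖ * ‖A‖ * ‖Γ⁻¹‖ * (1 + min ‖P‖ ‖Q‖ * ‖A‖ ^ 2 * ‖Γ⁻¹‖)
  open scoped Matrix.Norms.L2Operator in
  rcases min_choice (‖P‖ : ℝ) ‖Q‖ with h | h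
  · rw [h]
    exact kalman_aux P Q Γ A hP hQ hΓ
  · rw [h]
    have := kalman_aux Q P Γ A hQ hP hΓ
    rwa [norm_sub_rev, norm_sub_rev P Q] at this
end

section
/- Let P, P̃ be d×k real matrices, Q, Q̃ be k×k symmetric positive-semidefinite matrices, and Γ a k×k symmetric positive-definite matrix. Define the gain operator 𝒫(P, Q) = P (Q + Γ)⁻¹. Then ‖𝒫(P, Q) − 𝒫(P̃, Q̃)‖ ≤ ‖Γ⁻¹‖ ‖P − P̃‖ + ‖Γ⁻¹‖² ‖P‖ ‖Q − Q̃‖. -/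
open Matrix

open scoped Matrix.Norms.L2Operator
open scoped MatrixOrder

lemma opNorm_eq_norm {m n : Type*} [Fintype m] [Fintype n] [DecidableEq n]
    (A : Matrix m n ℝ) : opNorm A = ‖A‖ := rfl

lemma euclid_norm_sq (k : ℕ) (v : Fin k → ℝ) :
    ‖((WithLp.equiv 2 (Fin k → ℝ)).symm v : EuclideanSpace ℝ (Fin k))‖ ^ 2 = v ⬝ᵥ v := by
  rw [← real_inner_self_eq_norm_sq]
  simp only [PiLp.inner_apply, dotProduct, mul_comm]
  simp [sq]

/-- Core quadratic-form bound: `‖x‖² ≤ ‖Γ⁻¹‖ * xᵀ Γ x` for `Γ` positive definite. -/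
lemma quad_lower {k : ℕ} {Γ : Matrix (Fin k) (Fin k) ℝ} (hΓ : Γ.PosDef) (x : Fin k → ℝ) :
    x ⬝ᵥ x ≤ ‖Γ⁻¹‖ * (x ⬝ᵥ (Γ *ᵥ x)) := by
  set S := CFC.sqrt Γ with hS
  have hSH : S.IsHermitian := (Matrix.nonneg_iff_posSemidef.mp (CFC.sqrt_nonneg Γ)).1
  have hSS : S * S = Γ := CFC.sqrt_mul_sqrt_self Γ (Matrix.nonneg_iff_posSemidef.mpr hΓ.posSemidef)
  have hdS : IsUnit S.det := by
    have : S.det * S.det = Γ.det := by rw [← det_mul, hSS]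
    have hd : Γ.det ≠ 0 := ne_of_gt hΓ.det_pos
    refine isUnit_iff_ne_zero.2 fun h => hd ?_
    rw [← this, h, mul_zero]
  have hxeq : S⁻¹ *ᵥ (S *ᵥ x) = x := by
    rw [mulVec_mulVec, Matrix.nonsing_inv_mul S hdS, one_mulVec]
  have hinv : S⁻¹ * S⁻¹ = Γ⁻¹ := by
    rw [← Matrix.mul_inv_rev, hSS]
  have hSinvH : (S⁻¹).IsHermitian := hSH.inv
  -- norm of S⁻¹ squared equals norm of Γ⁻¹
  have hnorm : ‖S⁻¹‖ * ‖S⁻¹‖ = ‖Γ⁻¹‖ := by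
    rw [← hinv, ← Matrix.l2_opNorm_conjTranspose_mul_self S⁻¹, hSinvH.eq]
  -- quadratic form equals ‖S x‖²
  have hquad : x ⬝ᵥ (Γ *ᵥ x) = (S *ᵥ x) ⬝ᵥ (S *ᵥ x) := by
    have ht : Sᵀ = S := by
      rw [← Matrix.conjTranspose_eq_transpose_of_trivial]; exact hSH.eq
    have hsymm : x ᵥ* S = S *ᵥ x := by
      rw [← Matrix.mulVec_transpose, ht]
    rw [← hSS, ← mulVec_mulVec, Matrix.dotProduct_mulVec, hsymm]
  -- norm bound
  have hb := Matrix.l2_opNorm_mulVec S⁻¹ ((WithLp.equiv 2 (Fin k → ℝ)).symm (S *ᵥ x))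
  have hxx : x ⬝ᵥ x
      = ‖((WithLp.equiv 2 (Fin k → ℝ)).symm (S⁻¹ *ᵥ (S *ᵥ x)) : EuclideanSpace ℝ (Fin k))‖ ^ 2 := by
    rw [euclid_norm_sq, hxeq]
  have hSx : ‖((WithLp.equiv 2 (Fin k → ℝ)).symm (S *ᵥ x) : EuclideanSpace ℝ (Fin k))‖ ^ 2
      = x ⬝ᵥ (Γ *ᵥ x) := by rw [euclid_norm_sq, hquad]
  have hb' : ‖((WithLp.equiv 2 (Fin k → ℝ)).symm (S⁻¹ *ᵥ (S *ᵥ x)) : EuclideanSpace ℝ (Fin k))‖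
      ≤ ‖S⁻¹‖ * ‖((WithLp.equiv 2 (Fin k → ℝ)).symm (S *ᵥ x) : EuclideanSpace ℝ (Fin k))‖ := hb
  have h0 : (0:ℝ) ≤ ‖((WithLp.equiv 2 (Fin k → ℝ)).symm (S⁻¹ *ᵥ (S *ᵥ x)) : EuclideanSpace ℝ (Fin k))‖ := norm_nonneg _
  nlinarith [norm_nonneg ((WithLp.equiv 2 (Fin k → ℝ)).symm (S *ᵥ x) : EuclideanSpace ℝ (Fin k)), norm_nonneg (S⁻¹ : Matrix (Fin k) (Fin k) ℝ)]

/-- `‖(Q+Γ)⁻¹‖ ≤ ‖Γ⁻¹‖`. -/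
lemma inv_shift_norm_le {k : ℕ} {Q Γ : Matrix (Fin k) (Fin k) ℝ}
    (hQ : Q.PosSemidef) (hΓ : Γ.PosDef) : ‖(Q + Γ)⁻¹‖ ≤ ‖Γ⁻¹‖ := by
  have hB : (Q + Γ).PosDef := Matrix.PosDef.posSemidef_add hQ hΓ
  have hdB : IsUnit (Q + Γ).det := isUnit_iff_ne_zero.2 (ne_of_gt hB.det_pos)
  rw [Matrix.l2_opNorm_def]
  refine ContinuousLinearMap.opNorm_le_bound _ (norm_nonneg _) fun x => ?_
  set y : Fin k → ℝ := (Q + Γ)⁻¹ *ᵥ (WithLp.equiv 2 (Fin k → ℝ)) x with hy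
  show ‖((WithLp.equiv 2 (Fin k → ℝ)).symm y : EuclideanSpace ℝ (Fin k))‖ ≤ ‖Γ⁻¹‖ * ‖x‖
  have hBy : (Q + Γ) *ᵥ y = (WithLp.equiv 2 (Fin k → ℝ)) x := by
    rw [hy, mulVec_mulVec, Matrix.mul_nonsing_inv _ hdB, one_mulVec]
  have h1 : y ⬝ᵥ y ≤ ‖Γ⁻¹‖ * (y ⬝ᵥ (Γ *ᵥ y)) := quad_lower hΓ y
  have h2 : y ⬝ᵥ (Γ *ᵥ y) ≤ y ⬝ᵥ ((Q + Γ) *ᵥ y) := by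
    have := hQ.dotProduct_mulVec_nonneg y
    simp only [star_trivial] at this
    rw [add_mulVec, dotProduct_add]
    linarith
  have h3 : y ⬝ᵥ ((Q + Γ) *ᵥ y) = y ⬝ᵥ (WithLp.equiv 2 (Fin k → ℝ)) x := by rw [hBy]
  -- Cauchy–Schwarz
  have hcs : y ⬝ᵥ (WithLp.equiv 2 (Fin k → ℝ)) x
      ≤ ‖((WithLp.equiv 2 (Fin k → ℝ)).symm y : EuclideanSpace ℝ (Fin k))‖ * ‖x‖ := by
    have := real_inner_le_norm ((WithLp.equiv 2 (Fin k → ℝ)).symm y : EuclideanSpace ℝ (Fin k)) x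
    have hip : (inner ℝ ((WithLp.equiv 2 (Fin k → ℝ)).symm y : EuclideanSpace ℝ (Fin k)) x : ℝ)
        = y ⬝ᵥ (WithLp.equiv 2 (Fin k → ℝ)) x := by
      simp [PiLp.inner_apply, dotProduct, mul_comm]
    rw [hip] at this
    exact this
  have hyn : ‖((WithLp.equiv 2 (Fin k → ℝ)).symm y : EuclideanSpace ℝ (Fin k))‖ ^ 2 = y ⬝ᵥ y :=
    euclid_norm_sq k y
  set N := ‖((WithLp.equiv 2 (Fin k → ℝ)).symm y : EuclideanSpace ℝ (Fin k))‖ with hN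
  have hN0 : 0 ≤ N := norm_nonneg _
  have hkey : N ^ 2 ≤ ‖Γ⁻¹‖ * (N * ‖x‖) := by
    calc N ^ 2 = y ⬝ᵥ y := hyn
    _ ≤ ‖Γ⁻¹‖ * (y ⬝ᵥ (Γ *ᵥ y)) := h1
    _ ≤ ‖Γ⁻¹‖ * (y ⬝ᵥ (WithLp.equiv 2 (Fin k → ℝ)) x) := by
        refine mul_le_mul_of_nonneg_left ?_ (norm_nonneg _)
        rw [← h3]; exact h2
    _ ≤ ‖Γ⁻¹‖ * (N * ‖x‖) := mul_le_mul_of_nonneg_left hcs (norm_nonneg _)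
  rcases eq_or_lt_of_le hN0 with h0 | h0
  · rw [← h0]
    positivity
  · nlinarith [norm_nonneg x, norm_nonneg (Γ⁻¹ : Matrix (Fin k) (Fin k) ℝ)]

/-- Continuity of the nonlinear gain-update operator `𝒫(P, Q) = P (Q + Γ)⁻¹`. -/
theorem gain_update_continuity {d k : ℕ}
    (P Ptil : Matrix (Fin d) (Fin k) ℝ)
    (Q Qtil : Matrix (Fin k) (Fin k) ℝ)
    (Γ : Matrix (Fin k) (Fin k) ℝ)
    (hQ : Q.PosSemidef) (hQtil : Qtil.PosSemidef) (hΓ : Γ.PosDef) :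
    opNorm (P * (Q + Γ)⁻¹ - Ptil * (Qtil + Γ)⁻¹)
      ≤ opNorm Γ⁻¹ * opNorm (P - Ptil) + opNorm Γ⁻¹ ^ 2 * opNorm P * opNorm (Q - Qtil) := by
  simp only [opNorm_eq_norm]
  set B := Q + Γ with hB
  set Bt := Qtil + Γ with hBt
  have hBpd : B.PosDef := Matrix.PosDef.posSemidef_add hQ hΓ
  have hBtpd : Bt.PosDef := Matrix.PosDef.posSemidef_add hQtil hΓ
  have hdB : IsUnit B.det := isUnit_iff_ne_zero.2 (ne_of_gt hBpd.det_pos)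
  have hdBt : IsUnit Bt.det := isUnit_iff_ne_zero.2 (ne_of_gt hBtpd.det_pos)
  have hresolvent : B⁻¹ - Bt⁻¹ = B⁻¹ * (Qtil - Q) * Bt⁻¹ := by
    have h1 : Qtil - Q = Bt - B := by rw [hB, hBt]; abel
    rw [h1, mul_sub, sub_mul, mul_assoc, Matrix.mul_nonsing_inv _ hdBt, mul_one,
      mul_assoc, ← mul_assoc B⁻¹ B, Matrix.nonsing_inv_mul _ hdB, one_mul]
  have hiden : P * B⁻¹ - Ptil * Bt⁻¹
      = (P - Ptil) * Bt⁻¹ + P * (B⁻¹ * (Qtil - Q) * Bt⁻¹) := by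
    rw [← hresolvent, Matrix.sub_mul, Matrix.mul_sub]
    abel
  rw [hiden]
  have c1 : ‖B⁻¹‖ ≤ ‖Γ⁻¹‖ := inv_shift_norm_le hQ hΓ
  have c2 : ‖Bt⁻¹‖ ≤ ‖Γ⁻¹‖ := inv_shift_norm_le hQtil hΓ
  have t1 : ‖(P - Ptil) * Bt⁻¹‖ ≤ ‖P - Ptil‖ * ‖Bt⁻¹‖ := Matrix.l2_opNorm_mul _ _
  have t2 : ‖P * (B⁻¹ * (Qtil - Q) * Bt⁻¹)‖ ≤ ‖P‖ * (‖B⁻¹‖ * ‖Qtil - Q‖ * ‖Bt⁻¹‖) := by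
    calc ‖P * (B⁻¹ * (Qtil - Q) * Bt⁻¹)‖ ≤ ‖P‖ * ‖B⁻¹ * (Qtil - Q) * Bt⁻¹‖ :=
          Matrix.l2_opNorm_mul _ _
    _ ≤ ‖P‖ * (‖B⁻¹ * (Qtil - Q)‖ * ‖Bt⁻¹‖) := by
        exact mul_le_mul_of_nonneg_left (Matrix.l2_opNorm_mul _ _) (norm_nonneg _)
    _ ≤ ‖P‖ * (‖B⁻¹‖ * ‖Qtil - Q‖ * ‖Bt⁻¹‖) := by
        refine mul_le_mul_of_nonneg_left ?_ (norm_nonneg _)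
        exact mul_le_mul_of_nonneg_right (Matrix.l2_opNorm_mul _ _) (norm_nonneg _)
  have hrev : ‖Qtil - Q‖ = ‖Q - Qtil‖ := norm_sub_rev _ _
  have htri := norm_add_le ((P - Ptil) * Bt⁻¹) (P * (B⁻¹ * (Qtil - Q) * Bt⁻¹))
  have h0 : (0:ℝ) ≤ ‖B⁻¹‖ := norm_nonneg _
  have h0' : (0:ℝ) ≤ ‖Bt⁻¹‖ := norm_nonneg _
  have h1 : (0:ℝ) ≤ ‖P - Ptil‖ := norm_nonneg _
  have h2 : (0:ℝ) ≤ ‖P‖ := norm_nonneg _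
  have h3 : (0:ℝ) ≤ ‖Qtil - Q‖ := norm_nonneg _
  have hprod : ‖B⁻¹‖ * ‖Bt⁻¹‖ ≤ ‖Γ⁻¹‖ * ‖Γ⁻¹‖ :=
    mul_le_mul c1 c2 h0' (norm_nonneg _)
  have u1 : ‖P - Ptil‖ * ‖Bt⁻¹‖ ≤ ‖P - Ptil‖ * ‖Γ⁻¹‖ :=
    mul_le_mul_of_nonneg_left c2 h1
  have u2 : (‖P‖ * ‖Qtil - Q‖) * (‖B⁻¹‖ * ‖Bt⁻¹‖) ≤ (‖P‖ * ‖Qtil - Q‖) * (‖Γ⁻¹‖ * ‖Γ⁻¹‖) :=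
    mul_le_mul_of_nonneg_left hprod (mul_nonneg h2 h3)
  rw [← hrev, pow_two]
  nlinarith [u1, u2, t1, t2, htri, h1, h2, h3]
end

section
/- Let P, Q be d×k real matrices, Q' a k×k symmetric positive-semidefinite matrix, and Γ a k×k symmetric positive-definite matrix. Then the gain operator 𝒫(P, Q') = P (Q' + Γ)⁻¹ satisfies ‖𝒫(P, Q')‖ ≤ ‖Γ⁻¹‖ ‖P‖ + ‖Γ⁻¹‖² ‖Q'‖. -/
open Matrix

set_option linter.unusedSectionVars false

section helpers
variable {m n p : Type*} [Fintype m] [Fintype n] [Fintype p] [DecidableEq n] [DecidableEq p]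

lemma opNorm_nonneg (A : Matrix m n ℝ) : 0 ≤ opNorm A := norm_nonneg _

lemma mulVec_norm_le (A : Matrix m n ℝ) (x : n → ℝ) :
    ‖(WithLp.equiv 2 (m → ℝ)).symm (A *ᵥ x)‖ ≤ opNorm A * ‖(WithLp.equiv 2 (n → ℝ)).symm x‖ := by
  have := (LinearMap.toContinuousLinearMap (Matrix.toEuclideanLin A)).le_opNorm
    ((WithLp.equiv 2 (n → ℝ)).symm x)
  simpa [opNorm] using this

lemma inner_eq_dot (a b : n → ℝ) :
    (inner ℝ ((WithLp.equiv 2 (n → ℝ)).symm a) ((WithLp.equiv 2 (n → ℝ)).symm b) : ℝ) = a ⬝ᵥ b := by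
  simp [PiLp.inner_apply, dotProduct, RCLike.inner_apply, mul_comm]

lemma normsq_eq_dot (a : n → ℝ) :
    ‖(WithLp.equiv 2 (n → ℝ)).symm a‖ ^ 2 = a ⬝ᵥ a := by
  rw [← inner_eq_dot a a, real_inner_self_eq_norm_sq]
end helpers

set_option linter.unusedSectionVars false

section mul
variable {m n p : Type*} [Fintype m] [Fintype n] [Fintype p] [DecidableEq n] [DecidableEq p]

lemma opNorm_mul_le (A : Matrix m n ℝ) (B : Matrix n p ℝ) :
    opNorm (A * B) ≤ opNorm A * opNorm B := by
  apply ContinuousLinearMap.opNorm_le_bound _ (mul_nonneg (opNorm_nonneg A) (opNorm_nonneg B))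
  intro x
  have hx : x = (WithLp.equiv 2 (p → ℝ)).symm (WithLp.equiv 2 (p → ℝ) x) := rfl
  set xv := WithLp.equiv 2 (p → ℝ) x with hxv
  have h1 : (LinearMap.toContinuousLinearMap (Matrix.toEuclideanLin (A * B))) x
      = (WithLp.equiv 2 (m → ℝ)).symm (A *ᵥ (B *ᵥ xv)) := by
    simp [Matrix.toEuclideanLin_apply, Matrix.mulVec_mulVec]; rfl
  rw [h1]
  calc ‖(WithLp.equiv 2 (m → ℝ)).symm (A *ᵥ (B *ᵥ xv))‖
      ≤ opNorm A * ‖(WithLp.equiv 2 (n → ℝ)).symm (B *ᵥ xv)‖ := mulVec_norm_le A _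
    _ ≤ opNorm A * (opNorm B * ‖(WithLp.equiv 2 (p → ℝ)).symm xv‖) :=
        mul_le_mul_of_nonneg_left (mulVec_norm_le B xv) (opNorm_nonneg A)
    _ = opNorm A * opNorm B * ‖x‖ := by rw [← hx]; ring

lemma herm_dot {M : Matrix n n ℝ} (hM : M.IsHermitian) (v w : n → ℝ) :
    (M *ᵥ v) ⬝ᵥ w = v ⬝ᵥ (M *ᵥ w) := by
  have hMt : Mᵀ = M := by
    simpa [Matrix.conjTranspose_eq_transpose_of_trivial] using hM.eq
  rw [Matrix.dotProduct_mulVec, ← Matrix.mulVec_transpose, hMt]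
end mul

lemma inv_opNorm_le {k : ℕ} {Q' Γ : Matrix (Fin k) (Fin k) ℝ}
    (hQ' : Q'.PosSemidef) (hΓ : Γ.PosDef) :
    opNorm (Q' + Γ)⁻¹ ≤ opNorm Γ⁻¹ := by
  have hSpd : (Q' + Γ).PosDef := Matrix.PosDef.posSemidef_add hQ' hΓ
  have hSdet : IsUnit (Q' + Γ).det := isUnit_iff_ne_zero.mpr hSpd.det_pos.ne'
  -- square root of Γ
  obtain ⟨R, hRps, hRR⟩ : ∃ R : Matrix (Fin k) (Fin k) ℝ, R.PosSemidef ∧ R * R = Γ :=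
    by open scoped MatrixOrder in exact ⟨CFC.sqrt Γ, (CFC.sqrt_nonneg Γ).posSemidef, CFC.sqrt_mul_sqrt_self Γ hΓ.posSemidef.nonneg⟩
  have hRdet : IsUnit R.det := by
    refine isUnit_iff_ne_zero.mpr fun h => ?_
    have : Γ.det = R.det * R.det := by rw [← Matrix.det_mul, hRR]
    rw [h, mul_zero] at this
    exact hΓ.det_pos.ne' this
  have hGinv : Γ⁻¹ = R⁻¹ * R⁻¹ := by rw [← hRR, Matrix.mul_inv_rev]
  have hR1 : R * (Γ⁻¹ * R) = 1 := by
    rw [hGinv, Matrix.mul_assoc R⁻¹ R⁻¹ R, Matrix.nonsing_inv_mul R hRdet, Matrix.mul_one,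
      Matrix.mul_nonsing_inv R hRdet]
  -- key vector inequality
  have key : ∀ v : Fin k → ℝ,
      ‖(WithLp.equiv 2 (Fin k → ℝ)).symm v‖ ^ 2 ≤ opNorm Γ⁻¹ * (v ⬝ᵥ ((Q' + Γ) *ᵥ v)) := by
    intro v
    have h1 : ‖(WithLp.equiv 2 (Fin k → ℝ)).symm v‖ ^ 2 = (R *ᵥ v) ⬝ᵥ (Γ⁻¹ *ᵥ (R *ᵥ v)) := by
      rw [normsq_eq_dot, Matrix.mulVec_mulVec, herm_dot hRps.isHermitian,
        Matrix.mulVec_mulVec, hR1, Matrix.one_mulVec]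
    have h2 : (R *ᵥ v) ⬝ᵥ (R *ᵥ v) = v ⬝ᵥ (Γ *ᵥ v) := by
      rw [herm_dot hRps.isHermitian, Matrix.mulVec_mulVec, hRR]
    have h3 : (R *ᵥ v) ⬝ᵥ (Γ⁻¹ *ᵥ (R *ᵥ v)) ≤ opNorm Γ⁻¹ * ((R *ᵥ v) ⬝ᵥ (R *ᵥ v)) := by
      have hcs := real_inner_le_norm ((WithLp.equiv 2 (Fin k → ℝ)).symm (R *ᵥ v))
        ((WithLp.equiv 2 (Fin k → ℝ)).symm (Γ⁻¹ *ᵥ (R *ᵥ v)))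
      rw [inner_eq_dot] at hcs
      have hb := mulVec_norm_le Γ⁻¹ (R *ᵥ v)
      have := hcs.trans (mul_le_mul_of_nonneg_left hb (norm_nonneg _))
      calc (R *ᵥ v) ⬝ᵥ (Γ⁻¹ *ᵥ (R *ᵥ v))
          ≤ ‖(WithLp.equiv 2 (Fin k → ℝ)).symm (R *ᵥ v)‖ *
            (opNorm Γ⁻¹ * ‖(WithLp.equiv 2 (Fin k → ℝ)).symm (R *ᵥ v)‖) := this
        _ = opNorm Γ⁻¹ * ‖(WithLp.equiv 2 (Fin k → ℝ)).symm (R *ᵥ v)‖ ^ 2 := by ring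
        _ = opNorm Γ⁻¹ * ((R *ᵥ v) ⬝ᵥ (R *ᵥ v)) := by rw [normsq_eq_dot]
    have h4 : v ⬝ᵥ (Γ *ᵥ v) ≤ v ⬝ᵥ ((Q' + Γ) *ᵥ v) := by
      have hq := hQ'.dotProduct_mulVec_nonneg v
      simp only [star_trivial] at hq
      rw [Matrix.add_mulVec, dotProduct_add]
      linarith
    calc ‖(WithLp.equiv 2 (Fin k → ℝ)).symm v‖ ^ 2
        = (R *ᵥ v) ⬝ᵥ (Γ⁻¹ *ᵥ (R *ᵥ v)) := h1
      _ ≤ opNorm Γ⁻¹ * ((R *ᵥ v) ⬝ᵥ (R *ᵥ v)) := h3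
      _ = opNorm Γ⁻¹ * (v ⬝ᵥ (Γ *ᵥ v)) := by rw [h2]
      _ ≤ opNorm Γ⁻¹ * (v ⬝ᵥ ((Q' + Γ) *ᵥ v)) :=
          mul_le_mul_of_nonneg_left h4 (opNorm_nonneg Γ⁻¹)
  apply ContinuousLinearMap.opNorm_le_bound _ (opNorm_nonneg Γ⁻¹)
  intro x
  have hy : (LinearMap.toContinuousLinearMap (Matrix.toEuclideanLin (Q' + Γ)⁻¹)) x
      = (WithLp.equiv 2 (Fin k → ℝ)).symm ((Q' + Γ)⁻¹ *ᵥ (WithLp.equiv 2 (Fin k → ℝ) x)) := rfl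
  rw [hy]
  obtain ⟨yv, hyv⟩ : ∃ v : Fin k → ℝ, v = (Q' + Γ)⁻¹ *ᵥ (WithLp.equiv 2 (Fin k → ℝ) x) :=
    ⟨_, rfl⟩
  rw [← hyv]
  have hSy : (Q' + Γ) *ᵥ yv = WithLp.equiv 2 (Fin k → ℝ) x := by
    rw [hyv, Matrix.mulVec_mulVec, Matrix.mul_nonsing_inv _ hSdet, Matrix.one_mulVec]
  have h5 : yv ⬝ᵥ (WithLp.equiv 2 (Fin k → ℝ) x)
      ≤ ‖(WithLp.equiv 2 (Fin k → ℝ)).symm yv‖ * ‖x‖ := by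
    have hcs := real_inner_le_norm ((WithLp.equiv 2 (Fin k → ℝ)).symm yv) x
    have hx : x = (WithLp.equiv 2 (Fin k → ℝ)).symm (WithLp.equiv 2 (Fin k → ℝ) x) := rfl
    rw [hx, inner_eq_dot, ← hx] at hcs
    exact hcs
  have hchain : ‖(WithLp.equiv 2 (Fin k → ℝ)).symm yv‖ ^ 2
      ≤ opNorm Γ⁻¹ * (‖(WithLp.equiv 2 (Fin k → ℝ)).symm yv‖ * ‖x‖) := by
    have := key yv
    rw [hSy] at this
    refine this.trans ?_
    exact mul_le_mul_of_nonneg_left h5 (opNorm_nonneg Γ⁻¹)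
  rcases eq_or_lt_of_le (norm_nonneg ((WithLp.equiv 2 (Fin k → ℝ)).symm yv)) with h0 | h0
  · rw [← h0]
    exact mul_nonneg (opNorm_nonneg _) (norm_nonneg _)
  · nlinarith [hchain, h0]

/-- Boundedness of the nonlinear gain-update operator `𝒫(P, Q') = P (Q' + Γ)⁻¹`. -/
theorem gain_update_bounded {d k : ℕ}
    (P : Matrix (Fin d) (Fin k) ℝ)
    (Q' : Matrix (Fin k) (Fin k) ℝ)
    (Γ : Matrix (Fin k) (Fin k) ℝ)
    (hQ' : Q'.PosSemidef) (hΓ : Γ.PosDef) :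
    opNorm (P * (Q' + Γ)⁻¹) ≤ opNorm Γ⁻¹ * opNorm P + opNorm Γ⁻¹ ^ 2 * opNorm Q' := by
  have h1 := opNorm_mul_le P (Q' + Γ)⁻¹
  have h2 := inv_opNorm_le hQ' hΓ
  have h3 : 0 ≤ opNorm Γ⁻¹ ^ 2 * opNorm Q' :=
    mul_nonneg (pow_nonneg (opNorm_nonneg _) 2) (opNorm_nonneg _)
  have h4 : opNorm P * opNorm (Q' + Γ)⁻¹ ≤ opNorm P * opNorm Γ⁻¹ :=
    mul_le_mul_of_nonneg_left h2 (opNorm_nonneg P)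
  nlinarith
end

section
/- Fix q ∈ [0,1) and positive reals s, b₁, b₂. Let S be a d×d symmetric matrix with nonnegative entries such that every row satisfies Σⱼ S_{ij}^q ≤ s, and let B be a k×d matrix with nonnegative entries such that every row of B satisfies Σ_l B_{il}^q ≤ b₁ and every row of Bᵀ (column of B) satisfies Σⱼ B_{jm}^q ≤ b₂. Then every row sum of B S Bᵀ satisfies Σⱼ [BSBᵀ]_{ij} ≤ b₁ b₂ s ‖B‖_max^{2(1−q)} ‖S‖_max^{1−q}. -/
open Matrix

/-- `x ≤ x^q * M^(1-q)` when `0 ≤ x ≤ M` and `q < 1`. -/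
lemma soft_entry_bound {q x M : ℝ} (hq1 : q < 1) (hx : 0 ≤ x) (hxM : x ≤ M) :
    x ≤ x ^ q * M ^ (1 - q) := by
  have h1 : x = x ^ q * x ^ (1 - q) := by
    rw [← Real.rpow_add' hx (by norm_num)]
    norm_num
  conv_lhs => rw [h1]
  exact mul_le_mul_of_nonneg_left (Real.rpow_le_rpow hx hxM (by linarith : (0:ℝ) ≤ 1 - q))
    (Real.rpow_nonneg hx q)

/-- Soft-sparsity of `B S Bᵀ`: each row sum is bounded by
`b₁ * b₂ * s * ‖B‖_max^(2(1−q)) * ‖S‖_max^(1−q)`. -/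
theorem triple_product_soft_sparsity {d k : ℕ} (q s b₁ b₂ : ℝ)
    (hq0 : 0 ≤ q) (hq1 : q < 1) (hs : 0 < s) (hb₁ : 0 < b₁) (hb₂ : 0 < b₂)
    (S : Matrix (Fin d) (Fin d) ℝ) (B : Matrix (Fin k) (Fin d) ℝ)
    (hSsymm : S.IsSymm)
    (hSpos : ∀ i j, 0 ≤ S i j) (hBpos : ∀ i j, 0 ≤ B i j)
    (hSrow : ∀ i, ∑ j, (S i j) ^ q ≤ s)
    (hBrow : ∀ i, ∑ l, (B i l) ^ q ≤ b₁)
    (hBcol : ∀ m, ∑ j, (B j m) ^ q ≤ b₂) :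
    ∀ i, ∑ j, (B * S * Bᵀ) i j
      ≤ b₁ * b₂ * s * maxNorm B ^ (2 * (1 - q)) * maxNorm S ^ (1 - q) := by
  intro i
  have hMb0 : 0 ≤ maxNorm B := Real.iSup_nonneg fun p => abs_nonneg _
  have hMs0 : 0 ≤ maxNorm S := Real.iSup_nonneg fun p => abs_nonneg _
  set Mb := maxNorm B
  set Ms := maxNorm S
  have hBle : ∀ a b, B a b ≤ Mb := fun a b =>
    (le_abs_self _).trans (le_ciSup (f := fun p : Fin k × Fin d => |B p.1 p.2|)
      (Finite.bddAbove_range _) (a, b))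
  have hSle : ∀ a b, S a b ≤ Ms := fun a b =>
    (le_abs_self _).trans (le_ciSup (f := fun p : Fin d × Fin d => |S p.1 p.2|)
      (Finite.bddAbove_range _) (a, b))
  have hMbq : (0:ℝ) ≤ Mb ^ (1 - q) := Real.rpow_nonneg hMb0 _
  have hMsq : (0:ℝ) ≤ Ms ^ (1 - q) := Real.rpow_nonneg hMs0 _
  -- bound on column sums of B
  have hcol : ∀ m, ∑ j, B j m ≤ b₂ * Mb ^ (1 - q) := by
    intro m
    calc ∑ j, B j m ≤ ∑ j, (B j m) ^ q * Mb ^ (1 - q) := by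
          exact Finset.sum_le_sum fun j _ =>
            soft_entry_bound hq1 (hBpos j m) (hBle j m)
      _ = (∑ j, (B j m) ^ q) * Mb ^ (1 - q) := by rw [Finset.sum_mul]
      _ ≤ b₂ * Mb ^ (1 - q) := by
          exact mul_le_mul_of_nonneg_right (hBcol m) hMbq
  -- bound on row sums of S
  have hSsum : ∀ l, ∑ m, S l m ≤ s * Ms ^ (1 - q) := by
    intro l
    calc ∑ m, S l m ≤ ∑ m, (S l m) ^ q * Ms ^ (1 - q) := by
          exact Finset.sum_le_sum fun m _ =>
            soft_entry_bound hq1 (hSpos l m) (hSle l m)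
      _ = (∑ m, (S l m) ^ q) * Ms ^ (1 - q) := by rw [Finset.sum_mul]
      _ ≤ s * Ms ^ (1 - q) := mul_le_mul_of_nonneg_right (hSrow l) hMsq
  -- bound on row sum of B
  have hBsum : ∑ l, B i l ≤ b₁ * Mb ^ (1 - q) := by
    calc ∑ l, B i l ≤ ∑ l, (B i l) ^ q * Mb ^ (1 - q) := by
          exact Finset.sum_le_sum fun l _ =>
            soft_entry_bound hq1 (hBpos i l) (hBle i l)
      _ = (∑ l, (B i l) ^ q) * Mb ^ (1 - q) := by rw [Finset.sum_mul]
      _ ≤ b₁ * Mb ^ (1 - q) := mul_le_mul_of_nonneg_right (hBrow i) hMbq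
  have hBS : ∀ m, 0 ≤ ∑ l, B i l * S l m := fun m =>
    Finset.sum_nonneg fun l _ => mul_nonneg (hBpos i l) (hSpos l m)
  have hrewrite : ∑ j, (B * S * Bᵀ) i j
      = ∑ m, (∑ l, B i l * S l m) * (∑ j, B j m) := by
    simp only [Matrix.mul_apply, Matrix.transpose_apply]
    rw [Finset.sum_comm]
    exact Finset.sum_congr rfl fun m _ => by rw [Finset.mul_sum]
  rw [hrewrite]
  calc ∑ m, (∑ l, B i l * S l m) * (∑ j, B j m)
      ≤ ∑ m, (∑ l, B i l * S l m) * (b₂ * Mb ^ (1 - q)) :=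
        Finset.sum_le_sum fun m _ =>
          mul_le_mul_of_nonneg_left (hcol m) (hBS m)
    _ = (∑ m, ∑ l, B i l * S l m) * (b₂ * Mb ^ (1 - q)) := by
        rw [Finset.sum_mul]
    _ = (∑ l, B i l * ∑ m, S l m) * (b₂ * Mb ^ (1 - q)) := by
        rw [Finset.sum_comm]
        congr 1
        exact Finset.sum_congr rfl fun l _ => by rw [Finset.mul_sum]
    _ ≤ (∑ l, B i l * (s * Ms ^ (1 - q))) * (b₂ * Mb ^ (1 - q)) := by
        apply mul_le_mul_of_nonneg_right _ (mul_nonneg hb₂.le hMbq)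
        exact Finset.sum_le_sum fun l _ =>
          mul_le_mul_of_nonneg_left (hSsum l) (hBpos i l)
    _ = (∑ l, B i l) * (s * Ms ^ (1 - q)) * (b₂ * Mb ^ (1 - q)) := by
        rw [← Finset.sum_mul]
    _ ≤ (b₁ * Mb ^ (1 - q)) * (s * Ms ^ (1 - q)) * (b₂ * Mb ^ (1 - q)) := by
        apply mul_le_mul_of_nonneg_right _ (mul_nonneg hb₂.le hMbq)
        exact mul_le_mul_of_nonneg_right hBsum (mul_nonneg hs.le hMsq)
    _ = b₁ * b₂ * s * (Mb ^ (1 - q) * Mb ^ (1 - q)) * Ms ^ (1 - q) := by ring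
    _ = b₁ * b₂ * s * Mb ^ (2 * (1 - q)) * Ms ^ (1 - q) := by
        rw [← Real.rpow_add' hMb0 (by linarith)]
        ring_nf
end

section
/- Let Σ̂ and Σ be d×d real symmetric matrices with ‖Σ̂ − Σ‖_max ≤ ρ/2 for some ρ > 0, and suppose Σ satisfies the soft-sparsity condition max_i Σⱼ |Σ_{ij}|^q ≤ R for some q ∈ [0,1) and R > 0. Define the thresholded matrix Σ̂_ρ by [Σ̂_ρ]_{ij} = Σ̂_{ij} if |Σ̂_{ij}| ≥ ρ and 0 otherwise. Then ‖Σ̂_ρ − Σ‖_∞ ≤ 4 R ρ^{1−q}, where ‖M‖_∞ = max_i Σⱼ |M_{ij}| is the maximum absolute row sum. -/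
open Matrix

/-- Deterministic core of localized (thresholded) covariance estimation: if
`‖Σ̂ − Σ‖_max ≤ ρ/2` and `Σ` is soft-sparse, then the thresholded estimator `T` satisfies
the max-row-sum bound `‖T − Σ‖_∞ ≤ 4 R ρ^(1−q)`. -/
theorem thresholded_estimator_bound {d : ℕ} (q R ρ : ℝ)
    (hq0 : 0 ≤ q) (hq1 : q < 1) (hR : 0 < R) (hρ : 0 < ρ)
    (Shat Smat T : Matrix (Fin d) (Fin d) ℝ)
    (hShatsymm : Shat.IsSymm) (hSsymm : Smat.IsSymm)
    (hmax : ∀ i j, |Shat i j - Smat i j| ≤ ρ / 2)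
    (hsparse : ∀ i, ∑ j, |Smat i j| ^ q ≤ R)
    (hT : ∀ i j, T i j = if ρ ≤ |Shat i j| then Shat i j else 0) :
    ∀ i, ∑ j, |T i j - Smat i j| ≤ 4 * R * ρ ^ (1 - q) := by
  intro i
  have hρpow : (0:ℝ) ≤ ρ ^ (1 - q) := Real.rpow_nonneg hρ.le _
  have key : ∀ j, |T i j - Smat i j| ≤ 3 * ρ ^ (1 - q) * |Smat i j| ^ q := by
    intro j
    have hSq : (0:ℝ) ≤ |Smat i j| ^ q := Real.rpow_nonneg (abs_nonneg _) _
    by_cases hS : ρ / 2 ≤ |Smat i j|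
    · have h1 : |T i j - Smat i j| ≤ 3 * ρ / 2 := by
        rw [hT]
        split_ifs with h
        · linarith [hmax i j]
        · push_neg at h
          have h2 : |Smat i j| - |Shat i j| ≤ ρ / 2 := by
            have := abs_sub_abs_le_abs_sub (Smat i j) (Shat i j)
            rw [abs_sub_comm] at this
            linarith [hmax i j]
          rw [zero_sub, abs_neg]
          linarith
      have hρq : ρ ^ q ≤ (2 * |Smat i j|) ^ q :=
        Real.rpow_le_rpow hρ.le (by linarith) hq0
      have hmul : (2 * |Smat i j|) ^ q = 2 ^ q * |Smat i j| ^ q :=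
        Real.mul_rpow (by norm_num) (abs_nonneg _)
      have h2q : (2:ℝ) ^ q ≤ 2 := by
        calc (2:ℝ) ^ q ≤ (2:ℝ) ^ (1:ℝ) :=
              Real.rpow_le_rpow_of_exponent_le (by norm_num) hq1.le
          _ = 2 := Real.rpow_one 2
      have hρsplit : ρ = ρ ^ (1 - q) * ρ ^ q := by
        rw [← Real.rpow_add hρ]; norm_num
      have hpq : ρ ^ q ≤ 2 * |Smat i j| ^ q := by
        rw [hmul] at hρq
        nlinarith
      nlinarith
    · push_neg at hS
      have hT0 : T i j = 0 := by
        rw [hT]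
        have h2 : |Shat i j| - |Smat i j| ≤ ρ / 2 := by
          have := abs_sub_abs_le_abs_sub (Shat i j) (Smat i j)
          linarith [hmax i j]
        rw [if_neg]
        linarith
      rw [hT0, zero_sub, abs_neg]
      rcases eq_or_lt_of_le (abs_nonneg (Smat i j)) with h0 | h0
      · rw [← h0]
        positivity
      · have : |Smat i j| = |Smat i j| ^ (1 - q) * |Smat i j| ^ q := by
          rw [← Real.rpow_add h0]; norm_num
        have hle : |Smat i j| ^ (1 - q) ≤ ρ ^ (1 - q) :=
          Real.rpow_le_rpow (abs_nonneg _) (by linarith) (by linarith)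
        nlinarith
  calc ∑ j, |T i j - Smat i j| ≤ ∑ j, 3 * ρ ^ (1 - q) * |Smat i j| ^ q :=
        Finset.sum_le_sum fun j _ => key j
    _ = 3 * ρ ^ (1 - q) * ∑ j, |Smat i j| ^ q := by rw [Finset.mul_sum]
    _ ≤ 3 * ρ ^ (1 - q) * R := by
        apply mul_le_mul_of_nonneg_left (hsparse i) (by positivity)
    _ ≤ 4 * R * ρ ^ (1 - q) := by nlinarith
end
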